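/- In the NP-hardness construction, an edge gadget for edge v_i v_j contributes exactly 1 leader crossing if v_i and v_j are on opposite sides of the partition (leaf order ji', ij, ij', ji with ji' and ij left of center up to reversal), and exactly 2 crossings if they are on the same side (leaf order ij, ji, ij', ji' up to reversal). -/

import Mathlib

lemma mem_seg_iff (u v w z : ℝ) (p : ℝ × ℝ) :
    p ∈ segment ℝ ((u, v) : ℝ × ℝ) (w, z) ↔
    ∃ t, 0 ≤ t ∧ t ≤ 1 ∧ p.1 = u + t * (w - u) ∧ p.2 = v + t * (z - v) := by
  rw [segment_eq_image']
  constructor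
  · rintro ⟨t, ⟨ht0, ht1⟩, rfl⟩
    exact ⟨t, ht0, ht1, by simp [smul_eq_mul], by simp [smul_eq_mul]⟩
  · rintro ⟨t, ht0, ht1, h1, h2⟩
    exact ⟨t, ⟨ht0, ht1⟩, by ext <;> simp [smul_eq_mul, h1.symm, h2.symm]⟩

lemma nocross_opp (yi yj H ai aj : ℝ) (h1 : yi < yj) (hs : ai * aj < 0) :
    segment ℝ ((0, yi) : ℝ × ℝ) (ai, H) ∩ segment ℝ ((0, yj) : ℝ × ℝ) (aj, H) = ∅ := by
  ext p
  simp only [Set.mem_inter_iff, Set.mem_empty_iff_false, iff_false, mem_seg_iff]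
  rintro ⟨⟨t, ht0, ht1, hp1, hp2⟩, ⟨s, hs0, hs1, hq1, hq2⟩⟩
  have hai : ai ≠ 0 := fun h => by simp [h] at hs
  have haj : aj ≠ 0 := fun h => by simp [h] at hs
  have e1 : p.1 = t * ai := by linarith [hp1]
  have e2 : p.1 = s * aj := by linarith [hq1]
  have key : p.1 * p.1 = (t * s) * (ai * aj) := by
    rw [e1]; nth_rewrite 2 [e1.symm.trans e2]; ring
  have hp0 : p.1 = 0 := by nlinarith [mul_self_nonneg p.1, mul_nonneg ht0 hs0]
  have ht : t = 0 := by
    rcases mul_eq_zero.1 (e1.symm.trans hp0) with h | h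
    · exact h
    · exact absurd h hai
  have hss : s = 0 := by
    rcases mul_eq_zero.1 (e2.symm.trans hp0) with h | h
    · exact h
    · exact absurd h haj
  rw [ht] at hp2; rw [hss] at hq2
  simp at hp2 hq2
  linarith [hp2, hq2]

lemma nocross_far (yi yj H ai aj : ℝ) (h1 : yi < yj) (h2 : yj < H)
    (h3 : 0 < aj) (h4 : aj < ai) :
    segment ℝ ((0, yi) : ℝ × ℝ) (ai, H) ∩ segment ℝ ((0, yj) : ℝ × ℝ) (aj, H) = ∅ := by
  ext p
  simp only [Set.mem_inter_iff, Set.mem_empty_iff_false, iff_false, mem_seg_iff]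
  rintro ⟨⟨t, ht0, ht1, hp1, hp2⟩, ⟨s, hs0, hs1, hq1, hq2⟩⟩
  have e1 : t * ai = s * aj := by linarith [hp1, hq1]
  have e2 : yi + t * (H - yi) = yj + s * (H - yj) := by linarith [hp2, hq2]
  have hai : 0 < ai := h3.trans h4
  have hsD : s * (aj * (H - yi) - ai * (H - yj)) = ai * (yj - yi) := by
    linear_combination ai * e2 - (H - yi) * e1
  have hD : 0 < aj * (H - yi) - ai * (H - yj) := by
    nlinarith [hsD, mul_pos hai (sub_pos.2 h1)]
  nlinarith [hsD, mul_nonneg (sub_nonneg.2 hs1) hD.le,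
    mul_pos (sub_pos.2 h4) (sub_pos.2 (h1.trans h2))]

lemma cross_pos (yi yj H ai aj : ℝ) (h1 : yi < yj) (h2 : yj < H)
    (h3 : 0 < ai) (h4 : ai ≤ aj) :
    (segment ℝ ((0, yi) : ℝ × ℝ) (ai, H) ∩ segment ℝ ((0, yj) : ℝ × ℝ) (aj, H)).Nonempty := by
  set D : ℝ := aj * (H - yi) - ai * (H - yj) with hDdef
  have hD : 0 < D := by nlinarith [mul_pos h3 (sub_pos.2 h1)]
  set t : ℝ := aj * (yj - yi) / D with htdef
  set s : ℝ := ai * (yj - yi) / D with hsdef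
  have haj : 0 < aj := h3.trans_le h4
  have ht0 : 0 ≤ t := div_nonneg (by nlinarith) hD.le
  have hs0 : 0 ≤ s := div_nonneg (by nlinarith) hD.le
  have ht1 : t ≤ 1 := by
    rw [div_le_one hD]; nlinarith [mul_pos h3 (sub_pos.2 h2)]
  have hs1 : s ≤ 1 := by
    rw [div_le_one hD]; nlinarith [mul_pos h3 (sub_pos.2 h2)]
  refine ⟨(t * ai, yi + t * (H - yi)), ?_, ?_⟩
  · exact (mem_seg_iff _ _ _ _ _).2 ⟨t, ht0, ht1, by ring, rfl⟩
  · refine (mem_seg_iff _ _ _ _ _).2 ⟨s, hs0, hs1, ?_, ?_⟩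
    · show t * ai = 0 + s * (aj - 0)
      rw [htdef, hsdef]; field_simp; ring
    · show yi + t * (H - yi) = yj + s * (H - yj)
      rw [htdef, hsdef]; field_simp; ring

lemma cross_neg (yi yj H ai aj : ℝ) (h1 : yi < yj) (h2 : yj < H)
    (h3 : aj ≤ ai) (h4 : ai < 0) :
    (segment ℝ ((0, yi) : ℝ × ℝ) (ai, H) ∩ segment ℝ ((0, yj) : ℝ × ℝ) (aj, H)).Nonempty := by
  set D : ℝ := aj * (H - yi) - ai * (H - yj) with hDdef
  have hD : D < 0 := by nlinarith [mul_pos (neg_pos.2 h4) (sub_pos.2 h1)]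
  set t : ℝ := aj * (yj - yi) / D with htdef
  set s : ℝ := ai * (yj - yi) / D with hsdef
  have haj : aj < 0 := h3.trans_lt h4
  have hD' : 0 < -D := neg_pos.2 hD
  have ht' : t = (-aj) * (yj - yi) / (-D) := by
    rw [htdef, ← neg_div_neg_eq]; ring_nf
  have hs' : s = (-ai) * (yj - yi) / (-D) := by
    rw [hsdef, ← neg_div_neg_eq]; ring_nf
  have ht0 : 0 ≤ t := by rw [ht']; exact div_nonneg (by nlinarith) hD'.le
  have hs0 : 0 ≤ s := by rw [hs']; exact div_nonneg (by nlinarith) hD'.le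
  have ht1 : t ≤ 1 := by
    rw [ht', div_le_one hD']; nlinarith [mul_pos (neg_pos.2 h4) (sub_pos.2 h2)]
  have hs1 : s ≤ 1 := by
    rw [hs', div_le_one hD']; nlinarith [mul_pos (neg_pos.2 h4) (sub_pos.2 h2)]
  have hDne : aj * (H - yi) - ai * (H - yj) ≠ 0 := by rw [← hDdef]; exact hD.ne
  refine ⟨(t * ai, yi + t * (H - yi)), ?_, ?_⟩
  · exact (mem_seg_iff _ _ _ _ _).2 ⟨t, ht0, ht1, by ring, rfl⟩
  · refine (mem_seg_iff _ _ _ _ _).2 ⟨s, hs0, hs1, ?_, ?_⟩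
    · show t * ai = 0 + s * (aj - 0)
      rw [htdef, hsdef]; field_simp [hDne]; ring
    · show yi + t * (H - yi) = yj + s * (H - yj)
      rw [htdef, hsdef]; field_simp [hDne, hD.ne]; ring



/-  Number of crossings among the four leaders of an edge gadget: the four sites lie on
the central vertical axis `x = 0` at heights `y 0 < y 1 < y 2 < y 3` (sites `ij`, `ji`,
`ij'`, `ji'` from bottom to top) and the leader of site `k` is the straight segment to
the leaf point `(a k, h)` on the horizontal leaf line at height `h`. -/
open Classical in
noncomputable def quadCross (y : Fin 4 → ℝ) (h : ℝ) (a : Fin 4 → ℝ) : ℕ :=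
  ((Finset.univ ×ˢ Finset.univ).filter fun ij : Fin 4 × Fin 4 =>
    ij.1 < ij.2 ∧
      (segment ℝ (((0 : ℝ), y ij.1) : ℝ × ℝ) (a ij.1, h) ∩
        segment ℝ (((0 : ℝ), y ij.2) : ℝ × ℝ) (a ij.2, h)).Nonempty).card

/-- crossing counts of the edge gadget of the NP-hardness construction.
If the two endpoints of the edge are on opposite sides of the partition (leaf order
`ji', ij` left of the center, `ij', ji` right of it), the gadget induces exactly 1
crossing; if they are on the same side (leaf order pattern `ji, ij` left, `ij', ji'`
right), it induces exactly 2 crossings. -/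
theorem edgeGadget_crossings
    (y : Fin 4 → ℝ) (h : ℝ) (hy : StrictMono y) (hh : y 3 < h) (a : Fin 4 → ℝ) :
    ((a 3 < a 0 ∧ a 0 < 0 ∧ 0 < a 2 ∧ a 2 < a 1) → quadCross y h a = 1) ∧
    ((a 1 < a 0 ∧ a 0 < 0 ∧ 0 < a 2 ∧ a 2 < a 3) → quadCross y h a = 2) := by
  classical
  have y01 : y 0 < y 1 := hy (by decide)
  have y02 : y 0 < y 2 := hy (by decide)
  have y03 : y 0 < y 3 := hy (by decide)
  have y12 : y 1 < y 2 := hy (by decide)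
  have y13 : y 1 < y 3 := hy (by decide)
  have y23 : y 2 < y 3 := hy (by decide)
  have h1h : y 1 < h := y13.trans hh
  have h2h : y 2 < h := y23.trans hh
  constructor
  · rintro ⟨h30, h00, h02, h21⟩
    have e01 := nocross_opp (y 0) (y 1) h (a 0) (a 1) y01
      (mul_neg_of_neg_of_pos h00 (h02.trans h21))
    have e02 := nocross_opp (y 0) (y 2) h (a 0) (a 2) y02 (mul_neg_of_neg_of_pos h00 h02)
    have e12 := nocross_far (y 1) (y 2) h (a 1) (a 2) y12 h2h h02 h21
    have e13 := nocross_opp (y 1) (y 3) h (a 1) (a 3) y13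
      (mul_neg_of_pos_of_neg (h02.trans h21) (h30.trans h00))
    have e23 := nocross_opp (y 2) (y 3) h (a 2) (a 3) y23
      (mul_neg_of_pos_of_neg h02 (h30.trans h00))
    have n03 := cross_neg (y 0) (y 3) h (a 0) (a 3) y03 hh h30.le h00
    rw [quadCross]
    have hfil : ((Finset.univ ×ˢ Finset.univ).filter fun ij : Fin 4 × Fin 4 =>
        ij.1 < ij.2 ∧
          (segment ℝ (((0 : ℝ), y ij.1) : ℝ × ℝ) (a ij.1, h) ∩
            segment ℝ (((0 : ℝ), y ij.2) : ℝ × ℝ) (a ij.2, h)).Nonempty)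
        = {((0 : Fin 4), (3 : Fin 4))} := by
      ext ⟨i, j⟩
      fin_cases i <;> fin_cases j <;>
        simp [Finset.mem_filter, e01, e02, e12, e13, e23, n03, Prod.ext_iff]
    rw [hfil]
    rfl
  · rintro ⟨h10, h00, h02, h23⟩
    have e02 := nocross_opp (y 0) (y 2) h (a 0) (a 2) y02 (mul_neg_of_neg_of_pos h00 h02)
    have e03 := nocross_opp (y 0) (y 3) h (a 0) (a 3) y03
      (mul_neg_of_neg_of_pos h00 (h02.trans h23))
    have e12 := nocross_opp (y 1) (y 2) h (a 1) (a 2) y12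
      (mul_neg_of_neg_of_pos (h10.trans h00) h02)
    have e13 := nocross_opp (y 1) (y 3) h (a 1) (a 3) y13
      (mul_neg_of_neg_of_pos (h10.trans h00) (h02.trans h23))
    have n01 := cross_neg (y 0) (y 1) h (a 0) (a 1) y01 h1h h10.le h00
    have n23 := cross_pos (y 2) (y 3) h (a 2) (a 3) y23 hh h02 h23.le
    rw [quadCross]
    have hfil : ((Finset.univ ×ˢ Finset.univ).filter fun ij : Fin 4 × Fin 4 =>
        ij.1 < ij.2 ∧
          (segment ℝ (((0 : ℝ), y ij.1) : ℝ × ℝ) (a ij.1, h) ∩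
            segment ℝ (((0 : ℝ), y ij.2) : ℝ × ℝ) (a ij.2, h)).Nonempty)
        = {((0 : Fin 4), (1 : Fin 4)), ((2 : Fin 4), (3 : Fin 4))} := by
      ext ⟨i, j⟩
      fin_cases i <;> fin_cases j <;>
        simp [Finset.mem_filter, e02, e03, e12, e13, n01, n23, Prod.ext_iff]
    rw [hfil]
    rfl
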